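/- arXiv:0909.2242 — 7 statements merged into one kernel-verified Lean document; each statement's English description precedes it below -/
import Mathlib

section
/- For any arm sequence A, the relation ≻_A on boxes of fixed color is transitive: if b'' ≻_A b' and b' ≻_A b, then b'' ≻_A b. -/
/-- The content `c(b) = y - x` of a box `b = (x, y)` (boxes modeled as pairs of integers). -/
def cont (b : ℤ × ℤ) : ℤ := b.2 - b.1

/-- The order `≻_A` determined by an arm sequence `A`: for boxes `b', b` with
`c(b') - c(b) = n t`, `t > 0`, we have `b' ≻_A b` iff `y' - y > A_t`; for
`c(b) - c(b') = n t`, `t > 0`, we have `b' ≻_A b` iff not `b ≻_A b'`. -/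
def SuccA (n : ℤ) (A : ℤ → ℤ) (b' b : ℤ × ℤ) : Prop :=
  (∃ t : ℤ, 0 < t ∧ cont b' - cont b = n * t ∧ b'.2 - b.2 > A t) ∨
  (∃ t : ℤ, 0 < t ∧ cont b - cont b' = n * t ∧ ¬ (b.2 - b'.2 > A t))

/-- Uniform threshold function: `b' ≻_A b` iff `y' - y > armF A t` where
`cont b' - cont b = n t`, `t ≠ 0`. -/
def armF (A : ℤ → ℤ) (t : ℤ) : ℤ := if 0 < t then A t else -A (-t) - 1

lemma armF_subadd (A : ℤ → ℤ)
    (hA2 : ∀ t u : ℤ, 1 ≤ t → 1 ≤ u →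
      A (t + u) = A t + A u ∨ A (t + u) = A t + A u + 1)
    (t u : ℤ) (ht : t ≠ 0) (hu : u ≠ 0) (htu : t + u ≠ 0) :
    armF A (t + u) ≤ armF A t + armF A u + 1 := by
  unfold armF
  rcases lt_or_gt_of_ne ht with ht' | ht' <;> rcases lt_or_gt_of_ne hu with hu' | hu'
  · -- t < 0, u < 0
    have h := hA2 (-t) (-u) (by omega) (by omega)
    have e : -t + -u = -(t + u) := by ring
    rw [e] at h
    rw [if_neg (by omega : ¬ 0 < t + u), if_neg (by omega : ¬ 0 < t),
      if_neg (by omega : ¬ 0 < u)]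
    omega
  · -- t < 0, u > 0
    rcases lt_or_gt_of_ne htu with htu' | htu'
    · have h := hA2 u (-(t + u)) (by omega) (by omega)
      have e : u + -(t + u) = -t := by ring
      rw [e] at h
      rw [if_neg (by omega : ¬ 0 < t + u), if_neg (by omega : ¬ 0 < t),
        if_pos hu']
      omega
    · have h := hA2 (t + u) (-t) (by omega) (by omega)
      have e : t + u + -t = u := by ring
      rw [e] at h
      rw [if_pos htu', if_neg (by omega : ¬ 0 < t), if_pos hu']
      omega
  · -- t > 0, u < 0
    rcases lt_or_gt_of_ne htu with htu' | htu'
    · have h := hA2 t (-(t + u)) (by omega) (by omega)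
      have e : t + -(t + u) = -u := by ring
      rw [e] at h
      rw [if_neg (by omega : ¬ 0 < t + u), if_pos ht',
        if_neg (by omega : ¬ 0 < u)]
      omega
    · have h := hA2 (t + u) (-u) (by omega) (by omega)
      have e : t + u + -u = t := by ring
      rw [e] at h
      rw [if_pos htu', if_pos ht', if_neg (by omega : ¬ 0 < u)]
      omega
  · -- t > 0, u > 0
    have h := hA2 t u (by omega) (by omega)
    rw [if_pos (by omega : 0 < t + u), if_pos ht', if_pos hu']
    omega

lemma succA_iff (n : ℤ) (hn : n ≠ 0) (A : ℤ → ℤ) (b' b : ℤ × ℤ) (t : ℤ) (ht : t ≠ 0)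
    (hd : cont b' - cont b = n * t) :
    SuccA n A b' b ↔ b'.2 - b.2 > armF A t := by
  unfold SuccA armF
  constructor
  · rintro (⟨s, hs, hcs, hy⟩ | ⟨s, hs, hcs, hy⟩)
    · have hst : s = t := by
        have : n * s = n * t := by omega
        exact mul_left_cancel₀ hn this
      subst hst
      rw [if_pos hs]; exact hy
    · have hst : s = -t := by
        have h1 : n * s = n * (-t) := by
          have : n * (-t) = -(n * t) := by ring
          omega
        exact mul_left_cancel₀ hn h1
      subst hst
      rw [if_neg (by omega : ¬ 0 < t)]
      omega
  · intro hy
    rcases lt_or_gt_of_ne ht with ht' | ht'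
    · right
      refine ⟨-t, by omega, ?_, ?_⟩
      · have : n * (-t) = -(n * t) := by ring
        omega
      · rw [if_neg (by omega : ¬ 0 < t)] at hy
        omega
    · left
      rw [if_pos ht'] at hy
      exact ⟨t, ht', hd, hy⟩

/-- For any arm sequence `A`, the relation `≻_A` is transitive on boxes of a fixed color
(pairwise congruent, pairwise distinct contents). -/
theorem succA_trans (n : ℤ) (hn : 3 ≤ n) (A : ℤ → ℤ)
    (hA1 : ∀ t : ℤ, 1 ≤ t → t - 1 ≤ A t ∧ A t ≤ (n - 1) * t)
    (hA2 : ∀ t u : ℤ, 1 ≤ t → 1 ≤ u →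
      A (t + u) = A t + A u ∨ A (t + u) = A t + A u + 1)
    (b b' b'' : ℤ × ℤ)
    (hc1 : n ∣ (cont b' - cont b)) (hc2 : n ∣ (cont b'' - cont b'))
    (hd1 : cont b ≠ cont b') (hd2 : cont b' ≠ cont b'') (hd3 : cont b ≠ cont b'')
    (h1 : SuccA n A b'' b') (h2 : SuccA n A b' b) :
    SuccA n A b'' b := by
  have hn0 : n ≠ 0 := by omega
  obtain ⟨t, hdt⟩ := hc1
  obtain ⟨u, hdu⟩ := hc2
  have ht : t ≠ 0 := by
    rintro rfl; simp at hdt; exact hd1 (by omega)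
  have hu : u ≠ 0 := by
    rintro rfl; simp at hdu; exact hd2 (by omega)
  have hsum : cont b'' - cont b = n * (t + u) := by
    have : n * (t + u) = n * t + n * u := by ring
    omega
  have htu : t + u ≠ 0 := by
    intro h0
    rw [h0, mul_zero] at hsum
    exact hd3 (by omega)
  have H1 := (succA_iff n hn0 A b'' b' u hu hdu).mp h1
  have H2 := (succA_iff n hn0 A b' b t ht hdt).mp h2
  have Hsub := armF_subadd A hA2 t u ht hu htu
  exact (succA_iff n hn0 A b'' b (t + u) htu hsum).mpr (by omega)
end

section
/- Let b and b' be boxes with c(b') - c(b) = nt for some t > 0, where the contents are congruent modulo n. Then b' ≻_{A^H} b (i.e., y' - y > ⌈nt/2⌉ - 1) if and only if h(b') ≥ h(b), where h(b) = x + y is the height of the box. -/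
/-- For `n ≥ 3` and boxes `b = (x, y)`, `b' = (x', y')` with `c(b') - c(b) = n t`, `t > 0`,
we have `b' ≻_{A^H} b`, i.e. `y' - y > ⌈nt/2⌉ - 1`, if and only if `h(b') ≥ h(b)`,
where `c = y - x` is the content and `h = x + y` is the height. -/
theorem succAH_iff_height (n : ℤ) (hn : 3 ≤ n) (x y x' y' t : ℤ) (ht : 0 < t)
    (hc : (y' - x') - (y - x) = n * t) :
    (y' - y > ⌈((n : ℚ) * (t : ℚ)) / 2⌉ - 1) ↔ x + y ≤ x' + y' := by
  have hc' : ((y' : ℚ) - x') - (y - x) = n * t := by exact_mod_cast hc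
  rw [gt_iff_lt, Int.sub_one_lt_iff, Int.ceil_le, div_le_iff₀ (by norm_num : (0:ℚ) < 2)]
  push_cast
  constructor
  · intro h
    have : (x : ℚ) + y ≤ x' + y' := by linarith
    exact_mod_cast this
  · intro h
    have : (x : ℚ) + y ≤ x' + y' := by exact_mod_cast h
    linarith
end

section
/- Let λ be a partition, b an addable box and b' a removable box of λ with the same content residue mod n. If h(b) = h(b') + 1, then λ contains an A^H-illegal box (i.e., a box a with hook(a) = nt and arm(a) = A^H_t for some t ≥ 1). -/
/-- The content of a box with cell coordinates `(i, j)` (row `i`, column `j`, zero-indexed;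
in the paper's half-integer coordinates the box is `(i + 1/2, j + 1/2)`). -/
def content (p : ℕ × ℕ) : ℤ := (p.2 : ℤ) - (p.1 : ℤ)

/-- The height `h(b) = x_b + y_b` of a box (in the paper's half-integer coordinates). -/
def height (p : ℕ × ℕ) : ℤ := (p.1 : ℤ) + (p.2 : ℤ) + 1

/-- A box is addable if adding it yields a Young diagram. -/
def IsAddable (μ : YoungDiagram) (p : ℕ × ℕ) : Prop :=
  p ∉ μ ∧ ∃ ν : YoungDiagram, ν.cells = insert p μ.cells

/-- A box is removable if deleting it yields a Young diagram. -/
def IsRemovable (μ : YoungDiagram) (p : ℕ × ℕ) : Prop :=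
  p ∈ μ ∧ ∃ ν : YoungDiagram, ν.cells = μ.cells.erase p

/-- The arm sequence `A^H_t = ⌈n t / 2⌉ - 1`. -/
def AH (n : ℕ) (t : ℤ) : ℤ := ⌈((n : ℚ) * (t : ℚ)) / 2⌉ - 1

/-- The arm length of a box in a Young diagram. -/
def armLen (μ : YoungDiagram) (p : ℕ × ℕ) : ℤ := (μ.rowLen p.1 : ℤ) - (p.2 : ℤ) - 1

/-- The hook length of a box in a Young diagram. -/
def hookLen (μ : YoungDiagram) (p : ℕ × ℕ) : ℤ :=
  (μ.rowLen p.1 : ℤ) - (p.2 : ℤ) + (μ.colLen p.2 : ℤ) - (p.1 : ℤ) - 1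

/-- A box of `μ` is `A^H`-illegal if `hook = n t` and `arm = A^H_t` for some `t ≥ 1`. -/
def IllegalAH (n : ℕ) (μ : YoungDiagram) (p : ℕ × ℕ) : Prop :=
  p ∈ μ ∧ ∃ t : ℤ, 1 ≤ t ∧ hookLen μ p = (n : ℤ) * t ∧ armLen μ p = AH n t

/-- A partition is `A^H`-regular if it has no `A^H`-illegal boxes. -/
def RegularAH (n : ℕ) (μ : YoungDiagram) : Prop := ∀ p, ¬ IllegalAH n μ p

/-- The order `≻_{A^H}` on boxes whose contents are congruent mod `n` (and distinct):
`b' ≻ b` iff (for `c(b') - c(b) = n t`, `t > 0`) `y_{b'} - y_b > A^H_t`, and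
(for `c(b) - c(b') = n t`, `t > 0`) the negation of the corresponding condition. -/
def SuccAH (n : ℕ) (b' b : ℕ × ℕ) : Prop :=
  (∃ t : ℤ, 0 < t ∧ content b' - content b = (n : ℤ) * t ∧ (b'.2 : ℤ) - (b.2 : ℤ) > AH n t) ∨
  (∃ t : ℤ, 0 < t ∧ content b - content b' = (n : ℤ) * t ∧ ¬ ((b.2 : ℤ) - (b'.2 : ℤ) > AH n t))

open Classical in
/-- The finite set of addable boxes of a Young diagram. -/
noncomputable def addables (μ : YoungDiagram) : Finset (ℕ × ℕ) :=
  ((Finset.range (μ.colLen 0 + 1)) ×ˢ (Finset.range (μ.rowLen 0 + 1))).filter (IsAddable μ)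

open Classical in
/-- The finite set of removable boxes of a Young diagram. -/
noncomputable def removables (μ : YoungDiagram) : Finset (ℕ × ℕ) :=
  μ.cells.filter (IsRemovable μ)

/-- Addable boxes of color `i`. -/
noncomputable def addablesC (n : ℕ) (i : ZMod n) (μ : YoungDiagram) : Finset (ℕ × ℕ) :=
  (addables μ).filter (fun b => ((content b : ZMod n) = i))

/-- Removable boxes of color `i`. -/
noncomputable def removablesC (n : ℕ) (i : ZMod n) (μ : YoungDiagram) : Finset (ℕ × ℕ) :=
  (removables μ).filter (fun b => ((content b : ZMod n) = i))

lemma ceil_odd (k : ℤ) : ⌈((2*k+1 : ℤ) : ℚ)/2⌉ = k + 1 := by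
  have h : ((2*k+1 : ℤ) : ℚ)/2 = 1/2 + (k : ℚ) := by push_cast; ring
  have h12 : ⌈(1/2 : ℚ)⌉ = 1 := by
    rw [Int.ceil_eq_iff] <;> norm_num
  rw [h, show ((k : ℚ)) = ((k : ℤ) : ℚ) from rfl, Int.ceil_add_intCast, h12]
  ring

lemma AH_eq {n : ℕ} {t k : ℤ} (h : (n : ℤ) * t = 2*k+1) : AH n t = k := by
  unfold AH
  have : (n : ℚ) * (t : ℚ) = ((2*k+1 : ℤ) : ℚ) := by push_cast [← h]; ring
  rw [this, ceil_odd]; ring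

lemma addable_rowLen {μ : YoungDiagram} {x y : ℕ} (h : IsAddable μ (x, y)) :
    μ.rowLen x = y := by
  obtain ⟨hnm, ν, hν⟩ := h
  have hle : μ.rowLen x ≤ y := by
    by_contra hc
    exact hnm (YoungDiagram.mem_iff_lt_rowLen.mpr (lt_of_not_ge hc))
  refine le_antisymm hle ?_
  rcases Nat.eq_zero_or_pos y with h0 | h0
  · omega
  · have hmem : (x, y - 1) ∈ μ := by
      have h1 : (x, y) ∈ ν.cells := by rw [hν]; exact Finset.mem_insert_self _ _
      have h2 : (x, y - 1) ∈ ν.cells := ν.isLowerSet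
        (Prod.mk_le_mk.mpr ⟨le_refl x, Nat.sub_le y 1⟩) h1
      rw [hν, Finset.mem_insert] at h2
      rcases h2 with h2 | h2
      · exfalso; have := congrArg Prod.snd h2; simp at this; omega
      · exact h2
    have := YoungDiagram.mem_iff_lt_rowLen.mp hmem
    omega

lemma addable_colLen {μ : YoungDiagram} {x y : ℕ} (h : IsAddable μ (x, y)) :
    μ.colLen y = x := by
  obtain ⟨hnm, ν, hν⟩ := h
  have hle : μ.colLen y ≤ x := by
    by_contra hc
    exact hnm (YoungDiagram.mem_iff_lt_colLen.mpr (lt_of_not_ge hc))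
  refine le_antisymm hle ?_
  rcases Nat.eq_zero_or_pos x with h0 | h0
  · omega
  · have hmem : (x - 1, y) ∈ μ := by
      have h1 : (x, y) ∈ ν.cells := by rw [hν]; exact Finset.mem_insert_self _ _
      have h2 : (x - 1, y) ∈ ν.cells := ν.isLowerSet
        (Prod.mk_le_mk.mpr ⟨Nat.sub_le x 1, le_refl y⟩) h1
      rw [hν, Finset.mem_insert] at h2
      rcases h2 with h2 | h2
      · exfalso; have := congrArg Prod.fst h2; simp at this; omega
      · exact h2
    have := YoungDiagram.mem_iff_lt_colLen.mp hmem
    omega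

lemma removable_rowLen {μ : YoungDiagram} {x y : ℕ} (h : IsRemovable μ (x, y)) :
    μ.rowLen x = y + 1 := by
  obtain ⟨hm, ν, hν⟩ := h
  have h1 : y < μ.rowLen x := YoungDiagram.mem_iff_lt_rowLen.mp hm
  have h2 : (x, y + 1) ∉ μ := by
    intro hc
    have hcν : (x, y + 1) ∈ ν.cells := by
      rw [hν, Finset.mem_erase]
      exact ⟨by simp, hc⟩
    have : (x, y) ∈ ν.cells := ν.isLowerSet
      (Prod.mk_le_mk.mpr ⟨le_refl x, Nat.le_succ y⟩) hcν
    rw [hν, Finset.mem_erase] at this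
    exact this.1 rfl
  have := YoungDiagram.mem_iff_lt_rowLen.not.mp h2
  omega

lemma removable_colLen {μ : YoungDiagram} {x y : ℕ} (h : IsRemovable μ (x, y)) :
    μ.colLen y = x + 1 := by
  obtain ⟨hm, ν, hν⟩ := h
  have h1 : x < μ.colLen y := YoungDiagram.mem_iff_lt_colLen.mp hm
  have h2 : (x + 1, y) ∉ μ := by
    intro hc
    have hcν : (x + 1, y) ∈ ν.cells := by
      rw [hν, Finset.mem_erase]
      exact ⟨by simp, hc⟩
    have : (x, y) ∈ ν.cells := ν.isLowerSet
      (Prod.mk_le_mk.mpr ⟨Nat.le_succ x, le_refl y⟩) hcν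
    rw [hν, Finset.mem_erase] at this
    exact this.1 rfl
  have := YoungDiagram.mem_iff_lt_colLen.not.mp h2
  omega

/-- If `b` is addable and `b'` removable with the same content residue mod `n` and
`h(b) = h(b') + 1`, then the partition contains an `A^H`-illegal box. -/
theorem illegal_of_height_succ (n : ℕ) (hn : 3 ≤ n) (μ : YoungDiagram) (b b' : ℕ × ℕ)
    (hb : IsAddable μ b) (hb' : IsRemovable μ b')
    (hcong : (n : ℤ) ∣ (content b - content b'))
    (hh : height b = height b' + 1) :
    ∃ a, IllegalAH n μ a := by
  obtain ⟨x, y⟩ := b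
  obtain ⟨x', y'⟩ := b'
  obtain ⟨t, ht⟩ := hcong
  have hr : μ.rowLen x = y := addable_rowLen hb
  have hc : μ.colLen y = x := addable_colLen hb
  have hr' : μ.rowLen x' = y' + 1 := removable_rowLen hb'
  have hc' : μ.colLen y' = x' + 1 := removable_colLen hb'
  simp only [content, height] at ht hh
  have hn3 : (3 : ℤ) ≤ n := by exact_mod_cast hn
  have hnt : (n : ℤ) * t = 2 * ((y : ℤ) - y') - 1 := by linarith
  rcases lt_trichotomy t 0 with htn | ht0 | htp
  · -- t < 0 : use box (x', y) with parameter -t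
    have h3 : (3 : ℤ) ≤ (n : ℤ) * (-t) := by
      calc (3 : ℤ) = 3 * 1 := by ring
        _ ≤ (n : ℤ) * (-t) := mul_le_mul hn3 (by omega) (by norm_num) (by linarith)
    rw [mul_neg, hnt] at h3
    refine ⟨(x', y), YoungDiagram.mem_iff_lt_colLen.mpr ?_, -t, by omega, ?_, ?_⟩
    · rw [hc]; omega
    · show (μ.rowLen x' : ℤ) - y + (μ.colLen y : ℤ) - x' - 1 = (n : ℤ) * (-t)
      rw [mul_neg, hnt, hr', hc]; push_cast; omega
    · have hk : (n : ℤ) * (-t) = 2 * ((y' : ℤ) - y) + 1 := by rw [mul_neg, hnt]; ring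
      rw [AH_eq hk]
      show (μ.rowLen x' : ℤ) - y - 1 = (y' : ℤ) - y
      rw [hr']; push_cast; ring
  · rw [ht0, mul_zero] at hnt; omega
  · -- t > 0 : use box (x, y') with parameter t
    have h3 : (3 : ℤ) ≤ (n : ℤ) * t := by
      calc (3 : ℤ) = 3 * 1 := by ring
        _ ≤ (n : ℤ) * t := mul_le_mul hn3 (by omega) (by norm_num) (by linarith)
    rw [hnt] at h3
    refine ⟨(x, y'), YoungDiagram.mem_iff_lt_rowLen.mpr ?_, t, by omega, ?_, ?_⟩
    · rw [hr]; omega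
    · show (μ.rowLen x : ℤ) - y' + (μ.colLen y' : ℤ) - x - 1 = (n : ℤ) * t
      rw [hnt, hr, hc']; push_cast; omega
    · have hk : (n : ℤ) * t = 2 * ((y : ℤ) - y' - 1) + 1 := by rw [hnt]; ring
      rw [AH_eq hk]
      show (μ.rowLen x : ℤ) - y' - 1 = (y : ℤ) - y' - 1
      rw [hr]
end

section
/- Let λ be a partition, b an addable box and b' a removable box of λ with the same content residue mod n. If h(b) = h(b') and c(b) > c(b'), then λ contains an A^H-illegal box. -/
/-- If `b` is addable and `b'` removable with the same content residue mod `n`,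
`h(b) = h(b')` and `c(b) > c(b')`, then the partition contains an `A^H`-illegal box. -/
theorem illegal_of_height_eq (n : ℕ) (hn : 3 ≤ n) (μ : YoungDiagram) (b b' : ℕ × ℕ)
    (hb : IsAddable μ b) (hb' : IsRemovable μ b')
    (hcong : (n : ℤ) ∣ (content b - content b'))
    (hh : height b = height b') (hc : content b' < content b) :
    ∃ a, IllegalAH n μ a := by
  obtain ⟨x, y⟩ := b
  obtain ⟨x', y'⟩ := b'
  obtain ⟨t, ht⟩ := hcong
  simp only [content, height] at ht hh hc
  have hrl : μ.rowLen x = y := addable_rowLen hb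
  have hcl' : μ.colLen y' = x' + 1 := removable_colLen hb'
  -- basic inequalities
  have hyy' : y' < y := by omega
  have hxx' : x < x' := by omega
  have htpos : 1 ≤ t := by nlinarith [Int.natCast_pos.2 (by omega : 0 < n)]
  -- the witness box
  have hmem : (x, y') ∈ μ := μ.up_left_mem (le_of_lt hxx') le_rfl hb'.1
  refine ⟨(x, y'), hmem, t, htpos, ?_, ?_⟩
  · simp only [hookLen, hrl, hcl']
    push_cast
    omega
  · have hnt : (n : ℤ) * t = 2 * ((y : ℤ) - (y' : ℤ)) := by omega
    simp only [armLen, AH, hrl]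
    have h2 : ((n : ℚ) * (t : ℚ)) / 2 = ((y : ℤ) - (y' : ℤ) : ℤ) := by
      push_cast
      have : ((n : ℚ) * t) = 2 * ((y : ℚ) - (y' : ℚ)) := by exact_mod_cast congrArg (Int.cast : ℤ → ℚ) hnt
      linarith
    rw [h2, Int.ceil_intCast]
end

section
/- Let λ be an A^H-regular partition, b an addable box and b' a removable box of λ with the same content residue mod n. Then b ≻_{A^H} b' if and only if h(b) - 1 ≥ h(b') + 1. -/

lemma addable_spec {μ : YoungDiagram} {p : ℕ × ℕ} (h : IsAddable μ p) :
    μ.rowLen p.1 = p.2 ∧ μ.colLen p.2 = p.1 := by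
  obtain ⟨i, j⟩ := p
  show μ.rowLen i = j ∧ μ.colLen j = i
  obtain ⟨hnot, ν, hν⟩ := h
  have hmemν : (i, j) ∈ ν := by
    rw [← YoungDiagram.mem_cells, hν]; exact Finset.mem_insert_self _ _
  have hsub : ∀ q : ℕ × ℕ, q ∈ ν → q ≠ (i, j) → q ∈ μ := by
    intro q hq hne
    rw [← YoungDiagram.mem_cells, hν, Finset.mem_insert] at hq
    rcases hq with h | h
    · exact absurd h hne
    · exact (YoungDiagram.mem_cells _).mp h
  have hr1 : μ.rowLen i ≤ j := by
    by_contra hlt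
    push_neg at hlt
    exact hnot (YoungDiagram.mem_iff_lt_rowLen.mpr hlt)
  have hc1 : μ.colLen j ≤ i := by
    by_contra hlt
    push_neg at hlt
    exact hnot (YoungDiagram.mem_iff_lt_colLen.mpr hlt)
  constructor
  · rcases Nat.eq_zero_or_pos j with hj | hj
    · omega
    · have h1 : (i, j - 1) ∈ ν := ν.up_left_mem le_rfl (by omega) hmemν
      have h2 : (i, j - 1) ∈ μ := hsub _ h1 (by intro h; rw [Prod.mk.injEq] at h; omega)
      have := YoungDiagram.mem_iff_lt_rowLen.mp h2
      omega
  · rcases Nat.eq_zero_or_pos i with hi | hi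
    · omega
    · have h1 : (i - 1, j) ∈ ν := ν.up_left_mem (by omega) le_rfl hmemν
      have h2 : (i - 1, j) ∈ μ := hsub _ h1 (by intro h; rw [Prod.mk.injEq] at h; omega)
      have := YoungDiagram.mem_iff_lt_colLen.mp h2
      omega

lemma removable_spec {μ : YoungDiagram} {p : ℕ × ℕ} (h : IsRemovable μ p) :
    μ.rowLen p.1 = p.2 + 1 ∧ μ.colLen p.2 = p.1 + 1 := by
  obtain ⟨i, j⟩ := p
  show μ.rowLen i = j + 1 ∧ μ.colLen j = i + 1
  obtain ⟨hmem, ν, hν⟩ := h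
  have hnν : (i, j) ∉ ν := by
    rw [← YoungDiagram.mem_cells, hν]; exact Finset.notMem_erase _ _
  have hsub : ∀ q : ℕ × ℕ, q ∈ μ → q ≠ (i, j) → q ∈ ν := by
    intro q hq hne
    rw [← YoungDiagram.mem_cells, hν, Finset.mem_erase]
    exact ⟨hne, (YoungDiagram.mem_cells _).mpr hq⟩
  have hr1 : j < μ.rowLen i := YoungDiagram.mem_iff_lt_rowLen.mp hmem
  have hc1 : i < μ.colLen j := YoungDiagram.mem_iff_lt_colLen.mp hmem
  have hr2 : μ.rowLen i ≤ j + 1 := by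
    by_contra hlt
    push_neg at hlt
    have hm : (i, j + 1) ∈ μ := YoungDiagram.mem_iff_lt_rowLen.mpr hlt
    have h2 : (i, j + 1) ∈ ν := hsub _ hm (by intro h; rw [Prod.mk.injEq] at h; omega)
    exact hnν (ν.up_left_mem le_rfl (by omega) h2)
  have hc2 : μ.colLen j ≤ i + 1 := by
    by_contra hlt
    push_neg at hlt
    have hm : (i + 1, j) ∈ μ := YoungDiagram.mem_iff_lt_colLen.mpr hlt
    have h2 : (i + 1, j) ∈ ν := hsub _ hm (by intro h; rw [Prod.mk.injEq] at h; omega)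
    exact hnν (ν.up_left_mem (by omega) le_rfl h2)
  omega

lemma AH_bounds (n : ℕ) (t : ℤ) :
    (n : ℤ) * t ≤ 2 * (AH n t + 1) ∧ 2 * (AH n t + 1) ≤ (n : ℤ) * t + 1 := by
  have h1 : ((n : ℤ) * t : ℚ) ≤ ((2 * (AH n t + 1) : ℤ) : ℚ) := by
    have hle := Int.le_ceil (((n : ℚ) * (t : ℚ)) / 2)
    unfold AH
    push_cast
    linarith
  have h2 : ((2 * (AH n t + 1) : ℤ) : ℚ) < ((n : ℤ) * t : ℚ) + 2 := by
    have hlt := Int.ceil_lt_add_one (((n : ℚ) * (t : ℚ)) / 2)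
    unfold AH
    push_cast
    linarith
  constructor
  · exact_mod_cast h1
  · have h3 : (2 * (AH n t + 1) : ℤ) < (n : ℤ) * t + 2 := by exact_mod_cast h2
    linarith

/-- For an `A^H`-regular partition, an addable box `b` and a removable box `b'` of the same
color satisfy `b ≻_{A^H} b'` iff `h(b) - 1 ≥ h(b') + 1`. -/
theorem succAH_iff_height_gap (n : ℕ) (hn : 3 ≤ n) (μ : YoungDiagram)
    (hreg : RegularAH n μ) (b b' : ℕ × ℕ)
    (hb : IsAddable μ b) (hb' : IsRemovable μ b')
    (hcong : (n : ℤ) ∣ (content b - content b')) :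
    SuccAH n b b' ↔ height b' + 1 ≤ height b - 1 := by
  have hrb : μ.rowLen b.1 = b.2 := (addable_spec hb).1
  have hcb : μ.colLen b.2 = b.1 := (addable_spec hb).2
  have hrb' : μ.rowLen b'.1 = b'.2 + 1 := (removable_spec hb').1
  have hcb' : μ.colLen b'.2 = b'.1 + 1 := (removable_spec hb').2
  obtain ⟨i, j⟩ := b
  obtain ⟨i', j'⟩ := b'
  simp only at hrb hcb hrb' hcb'
  obtain ⟨t, ht⟩ := hcong
  have ht' : (j : ℤ) - (i : ℤ) - ((j' : ℤ) - (i' : ℤ)) = (n : ℤ) * t := by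
    simpa [content] using ht
  have hn0 : (0 : ℤ) < (n : ℤ) := by exact_mod_cast (by omega : 0 < n)
  have hkey : (i ≤ i' ∧ j' < j) ∨ (i' < i ∧ j ≤ j') := by
    rcases le_or_gt i i' with h | h
    · have := μ.rowLen_anti i i' h
      left; omega
    · have h2 : μ.rowLen i ≤ μ.rowLen (i' + 1) := μ.rowLen_anti _ _ (by omega)
      have h3 : μ.rowLen (i' + 1) ≤ j' := by
        by_contra hlt
        push_neg at hlt
        have hm : (i' + 1, j') ∈ μ := YoungDiagram.mem_iff_lt_rowLen.mpr hlt
        have := YoungDiagram.mem_iff_lt_colLen.mp hm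
        omega
      right; omega
  rcases hkey with ⟨hii, hjj⟩ | ⟨hii, hjj⟩
  · -- content b > content b', b' is down-left
    have ht1 : 1 ≤ t := by
      by_contra hc
      push_neg at hc
      have h0 : t ≤ 0 := by omega
      have : (n : ℤ) * t ≤ 0 := mul_nonpos_of_nonneg_of_nonpos (le_of_lt hn0) h0
      have hD : (0 : ℤ) < (j : ℤ) - (i : ℤ) - ((j' : ℤ) - (i' : ℤ)) := by
        have h1 : (j' : ℤ) < (j : ℤ) := by exact_mod_cast hjj
        have h2 : (i : ℤ) ≤ (i' : ℤ) := by exact_mod_cast hii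
        linarith
      linarith
    have hpmem : (i, j') ∈ μ := YoungDiagram.mem_iff_lt_rowLen.mpr (by omega)
    have hhook : hookLen μ (i, j') = (n : ℤ) * t := by
      unfold hookLen
      simp only [hrb, hcb']
      push_cast
      linarith
    have harm : armLen μ (i, j') = (j : ℤ) - (j' : ℤ) - 1 := by
      unfold armLen
      simp only [hrb]
    have harm_ne : (j : ℤ) - (j' : ℤ) - 1 ≠ AH n t := by
      intro hEq
      exact hreg (i, j') ⟨hpmem, t, ht1, hhook, harm.trans hEq⟩
    obtain ⟨hA1, hA2⟩ := AH_bounds n t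
    simp only [SuccAH, content, height]
    constructor
    · rintro (⟨s, hs0, hseq, hsgt⟩ | ⟨s, hs0, hseq, hsgt⟩)
      · have hst : s = t := by
          have heq : (n : ℤ) * s = (n : ℤ) * t := by linarith
          exact mul_left_cancel₀ (ne_of_gt hn0) heq
        subst hst
        set A := AH n s with hA
        omega
      · exfalso
        have hpos : (0 : ℤ) < (n : ℤ) * s := mul_pos hn0 hs0
        have h1 : (j' : ℤ) < (j : ℤ) := by exact_mod_cast hjj
        have h2 : (i : ℤ) ≤ (i' : ℤ) := by exact_mod_cast hii
        linarith
    · intro hge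
      left
      refine ⟨t, by omega, ht', ?_⟩
      set A := AH n t with hA
      omega
  · -- content b < content b', b' is up-right
    have hmt : (j' : ℤ) - (i' : ℤ) - ((j : ℤ) - (i : ℤ)) = (n : ℤ) * (-t) := by
      linarith
    have ht1 : 1 ≤ -t := by
      by_contra hc
      push_neg at hc
      have h0 : -t ≤ 0 := by omega
      have : (n : ℤ) * (-t) ≤ 0 := mul_nonpos_of_nonneg_of_nonpos (le_of_lt hn0) h0
      have hD : (0 : ℤ) < (j' : ℤ) - (i' : ℤ) - ((j : ℤ) - (i : ℤ)) := by
        have h1 : (j : ℤ) ≤ (j' : ℤ) := by exact_mod_cast hjj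
        have h2 : (i' : ℤ) < (i : ℤ) := by exact_mod_cast hii
        linarith
      linarith
    have hpmem : (i', j) ∈ μ := YoungDiagram.mem_iff_lt_rowLen.mpr (by omega)
    have hhook : hookLen μ (i', j) = (n : ℤ) * (-t) := by
      unfold hookLen
      simp only [hrb', hcb]
      push_cast
      linarith
    have harm : armLen μ (i', j) = (j' : ℤ) - (j : ℤ) := by
      unfold armLen
      simp only [hrb']
      omega
    have harm_ne : (j' : ℤ) - (j : ℤ) ≠ AH n (-t) := by
      intro hEq
      exact hreg (i', j) ⟨hpmem, -t, ht1, hhook, harm.trans hEq⟩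
    obtain ⟨hA1, hA2⟩ := AH_bounds n (-t)
    simp only [SuccAH, content, height]
    constructor
    · rintro (⟨s, hs0, hseq, hsgt⟩ | ⟨s, hs0, hseq, hsgt⟩)
      · exfalso
        have hpos : (0 : ℤ) < (n : ℤ) * s := mul_pos hn0 hs0
        have h1 : (j : ℤ) ≤ (j' : ℤ) := by exact_mod_cast hjj
        have h2 : (i' : ℤ) < (i : ℤ) := by exact_mod_cast hii
        linarith
      · have hst : s = -t := by
          have heq : (n : ℤ) * s = (n : ℤ) * (-t) := by linarith
          exact mul_left_cancel₀ (ne_of_gt hn0) heq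
        subst hst
        set A := AH n (-t) with hA
        omega
    · intro hge
      right
      refine ⟨-t, by omega, hmt, ?_⟩
      set A := AH n (-t) with hA
      omega
end

section
/- If μ = λ ⊔ b is obtained from a partition λ by adding a single box b, then Ψ(μ) = A_{c̄(b), h(b)}^{-1} · Ψ(λ), where Ψ(λ) = ∏_{b ∈ A(λ)} Y_{c̄(b), h(b)-1} · ∏_{b ∈ R(λ)} Y_{c̄(b), h(b)+1}^{-1}, A(λ) and R(λ) are the sets of addable and removable boxes of λ, and A_{ī,k} = Y_{ī,k-1} Y_{ī,k+1} Y_{ī+1,k}^{-1} Y_{ī-1,k}^{-1}. -/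
/-- Monomials in the variables `Y_{i,k}^{±1}`, written additively: a monomial is the finitely
supported function recording the exponent of each variable `Y_{i,k}`. -/
abbrev Mon (n : ℕ) := (ZMod n × ℤ) →₀ ℤ

/-- The variable `Y_{i,k}` as a monomial. -/
noncomputable def Yvar (n : ℕ) (i : ZMod n) (k : ℤ) : Mon n := Finsupp.single (i, k) 1

/-- The monomial `A_{i,k} = Y_{i,k-1} Y_{i,k+1} Y_{i+1,k}^{-1} Y_{i-1,k}^{-1}` (written additively). -/
noncomputable def Avar (n : ℕ) (i : ZMod n) (k : ℤ) : Mon n :=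
  Yvar n i (k - 1) + Yvar n i (k + 1) - Yvar n (i + 1) k - Yvar n (i - 1) k
/-- The map `Ψ(λ) = ∏_{b ∈ A(λ)} Y_{c̄(b), h(b)-1} ∏_{b ∈ R(λ)} Y_{c̄(b), h(b)+1}^{-1}`,
written additively. -/
noncomputable def Psi (n : ℕ) (μ : YoungDiagram) : Mon n :=
  (∑ b ∈ addables μ, Finsupp.single ((content b : ZMod n), height b - 1) (1 : ℤ))
  - ∑ b ∈ removables μ, Finsupp.single ((content b : ZMod n), height b + 1) (1 : ℤ)

lemma rowLen_zero_mono {μ : YoungDiagram} {N i : ℕ} (h : μ.rowLen N = 0) (hNi : N ≤ i) :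
    μ.rowLen i = 0 := Nat.le_zero.mp (h ▸ μ.rowLen_anti N i hNi)

lemma isAddable_iff {μ : YoungDiagram} {i j : ℕ} :
    IsAddable μ (i, j) ↔ j = μ.rowLen i ∧ (i = 0 ∨ μ.rowLen i < μ.rowLen (i - 1)) := by
  constructor
  · rintro ⟨hnot, ν, hν⟩
    have hmem : ∀ q : ℕ × ℕ, q ∈ ν ↔ q = (i, j) ∨ q ∈ μ := by
      intro q; rw [← YoungDiagram.mem_cells, hν, Finset.mem_insert, YoungDiagram.mem_cells]
    rw [YoungDiagram.mem_iff_lt_rowLen, not_lt] at hnot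
    have hij : (i, j) ∈ ν := (hmem _).2 (Or.inl rfl)
    have hge : j ≤ μ.rowLen i := by
      rcases Nat.eq_zero_or_pos j with h0 | h0
      · omega
      · have h1 : (i, j - 1) ∈ ν := ν.up_left_mem le_rfl (by omega) hij
        rcases (hmem _).1 h1 with h | h
        · exact absurd (congrArg Prod.snd h) (by simp; omega)
        · rw [YoungDiagram.mem_iff_lt_rowLen] at h; omega
    refine ⟨by omega, ?_⟩
    rcases Nat.eq_zero_or_pos i with h0 | h0
    · exact Or.inl h0
    · right
      have h1 : (i - 1, j) ∈ ν := ν.up_left_mem (by omega) le_rfl hij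
      rcases (hmem _).1 h1 with h | h
      · exact absurd (congrArg Prod.fst h) (by simp; omega)
      · rw [YoungDiagram.mem_iff_lt_rowLen] at h; omega
  · rintro ⟨hj, hcond⟩
    have hnot : (i, j) ∉ μ := by rw [YoungDiagram.mem_iff_lt_rowLen]; omega
    refine ⟨hnot, ⟨⟨insert (i, j) μ.cells, ?_⟩, rfl⟩⟩
    rw [Finset.coe_insert]
    intro x y hyx hx
    rcases Set.mem_insert_iff.mp hx with rfl | hx
    · rcases eq_or_ne y (i, j) with rfl | hne
      · exact Set.mem_insert _ _
      · refine Set.mem_insert_of_mem _ ?_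
        have hy1 : y.1 ≤ i := hyx.1
        have hy2 : y.2 ≤ j := hyx.2
        show y ∈ μ.cells
        rw [YoungDiagram.mem_cells]
        rcases lt_or_eq_of_le hy2 with h2 | h2
        · have : (i, y.2) ∈ μ := by rw [YoungDiagram.mem_iff_lt_rowLen]; omega
          have := μ.up_left_mem hy1 le_rfl this
          simpa using this
        · have h1 : y.1 < i := by
            rcases lt_or_eq_of_le hy1 with h | h
            · exact h
            · exact absurd (Prod.ext h h2) hne
          have hi0 : i ≠ 0 := by omega
          have hlt : μ.rowLen i < μ.rowLen (i - 1) := hcond.resolve_left hi0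
          have : (i - 1, j) ∈ μ := by rw [YoungDiagram.mem_iff_lt_rowLen]; omega
          have := μ.up_left_mem (by omega : y.1 ≤ i - 1) (le_of_eq h2) this
          simpa using this
    · exact Set.mem_insert_of_mem _ (μ.isLowerSet hyx hx)

lemma isRemovable_iff {μ : YoungDiagram} {i j : ℕ} :
    IsRemovable μ (i, j) ↔ j + 1 = μ.rowLen i ∧ μ.rowLen (i + 1) < μ.rowLen i := by
  constructor
  · rintro ⟨hmem, ν, hν⟩
    have hmemν : ∀ q : ℕ × ℕ, q ∈ ν ↔ q ∈ μ ∧ q ≠ (i, j) := by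
      intro q
      rw [← YoungDiagram.mem_cells, hν, Finset.mem_erase, YoungDiagram.mem_cells, and_comm]
    rw [YoungDiagram.mem_iff_lt_rowLen] at hmem
    have h1 : (i, j + 1) ∉ μ := by
      intro h
      have hν1 : (i, j + 1) ∈ ν := (hmemν _).2 ⟨h, by simp⟩
      have : (i, j) ∈ ν := ν.up_left_mem le_rfl (by omega) hν1
      exact ((hmemν _).1 this).2 rfl
    have h2 : (i + 1, j) ∉ μ := by
      intro h
      have hν1 : (i + 1, j) ∈ ν := (hmemν _).2 ⟨h, by simp⟩
      have : (i, j) ∈ ν := ν.up_left_mem (by omega) le_rfl hν1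
      exact ((hmemν _).1 this).2 rfl
    rw [YoungDiagram.mem_iff_lt_rowLen, not_lt] at h1 h2
    exact ⟨by omega, by omega⟩
  · rintro ⟨hj, hlt⟩
    have hmem : (i, j) ∈ μ := by rw [YoungDiagram.mem_iff_lt_rowLen]; omega
    refine ⟨hmem, ⟨⟨μ.cells.erase (i, j), ?_⟩, rfl⟩⟩
    rw [Finset.coe_erase]
    intro x y hyx hx
    obtain ⟨hxμ, hxne⟩ : x ∈ μ ∧ x ≠ (i, j) := by
      simpa [YoungDiagram.mem_cells] using hx
    have hyμ : y ∈ μ := μ.isLowerSet hyx hxμ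
    have hyne : y ≠ (i, j) := by
      rintro rfl
      have hx1 : i ≤ x.1 := hyx.1
      have hx2 : j ≤ x.2 := hyx.2
      have hxμ' : x.2 < μ.rowLen x.1 := by
        rw [← YoungDiagram.mem_iff_lt_rowLen]; simpa using hxμ
      rcases Nat.lt_or_ge i x.1 with h | h
      · have := μ.rowLen_anti (i+1) x.1 (by omega)
        omega
      · have hx1' : x.1 = i := by omega
        have : x.2 = j := by rw [hx1'] at hxμ'; omega
        exact hxne (Prod.ext hx1' this)
    simp [YoungDiagram.mem_cells, hyμ, hyne]

lemma mem_addables {μ : YoungDiagram} {p : ℕ × ℕ} : p ∈ addables μ ↔ IsAddable μ p := by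
  classical
  obtain ⟨i, j⟩ := p
  simp only [addables, Finset.mem_filter, Finset.mem_product, Finset.mem_range]
  constructor
  · exact fun h => h.2
  · intro h
    refine ⟨⟨?_, ?_⟩, h⟩
    · rcases isAddable_iff.mp h with ⟨hj, h0 | hlt⟩
      · omega
      · have : (i - 1, 0) ∈ μ := by rw [YoungDiagram.mem_iff_lt_rowLen]; omega
        rw [YoungDiagram.mem_iff_lt_colLen] at this
        omega
    · have := (isAddable_iff.mp h).1
      have := μ.rowLen_anti 0 i (Nat.zero_le i)
      omega

lemma mem_removables {μ : YoungDiagram} {p : ℕ × ℕ} : p ∈ removables μ ↔ IsRemovable μ p := by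
  classical
  simp only [removables, Finset.mem_filter, YoungDiagram.mem_cells]
  exact ⟨fun h => h.2, fun h => ⟨h.1, h⟩⟩

lemma addables_eq (μ : YoungDiagram) (N : ℕ) (hN : μ.rowLen N = 0) :
    addables μ = ((Finset.range (N + 1)).filter
      (fun i => i = 0 ∨ μ.rowLen i < μ.rowLen (i - 1))).image (fun i => (i, μ.rowLen i)) := by
  ext ⟨i, j⟩
  simp only [mem_addables, isAddable_iff, Finset.mem_image, Finset.mem_filter, Finset.mem_range,
    Prod.mk.injEq]
  constructor
  · rintro ⟨rfl, hc⟩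
    refine ⟨i, ⟨?_, hc⟩, rfl, rfl⟩
    by_contra h
    rcases hc with rfl | hlt
    · omega
    · have h1 : μ.rowLen (i - 1) = 0 := rowLen_zero_mono hN (by omega)
      omega
  · rintro ⟨a, ⟨ha, hc⟩, rfl, rfl⟩
    exact ⟨rfl, hc⟩

lemma removables_eq (μ : YoungDiagram) (N : ℕ) (hN : μ.rowLen N = 0) :
    removables μ = ((Finset.range N).filter
      (fun i => μ.rowLen (i + 1) < μ.rowLen i)).image (fun i => (i, μ.rowLen i - 1)) := by
  ext ⟨i, j⟩
  simp only [mem_removables, isRemovable_iff, Finset.mem_image, Finset.mem_filter,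
    Finset.mem_range, Prod.mk.injEq]
  constructor
  · rintro ⟨hj, hlt⟩
    refine ⟨i, ⟨?_, hlt⟩, rfl, by omega⟩
    by_contra h
    have : μ.rowLen i = 0 := rowLen_zero_mono hN (by omega)
    omega
  · rintro ⟨a, ⟨ha, hc⟩, rfl, rfl⟩
    exact ⟨by omega, hc⟩

lemma psi_eq (n : ℕ) (μ : YoungDiagram) (N : ℕ) (hN : μ.rowLen N = 0) :
    Psi n μ = (∑ i ∈ Finset.range (N + 1),
        Finsupp.single ((((μ.rowLen i : ℤ) - i : ℤ) : ZMod n), (i : ℤ) + μ.rowLen i) (1 : ℤ))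
      - ∑ i ∈ Finset.range N,
        Finsupp.single ((((μ.rowLen i : ℤ) - 1 - i : ℤ) : ZMod n), (i : ℤ) + μ.rowLen i + 1) (1 : ℤ) := by
  have hinj : ∀ (f : ℕ → ℕ × ℕ), (∀ a, (f a).1 = a) → ∀ (s : Finset ℕ), Set.InjOn f s := by
    intro f hf s a _ b _ hab
    have := congrArg Prod.fst hab
    simpa [hf] using this
  rw [Psi, addables_eq μ N hN, removables_eq μ N hN, Finset.sum_image, Finset.sum_image]
  rotate_left
  · exact fun a _ b _ h => by simpa using congrArg Prod.fst h
  · exact fun a _ b _ h => by simpa using congrArg Prod.fst h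
  have hA : ∀ i ∈ (Finset.range (N + 1)).filter
      (fun i => i = 0 ∨ μ.rowLen i < μ.rowLen (i - 1)),
      Finsupp.single ((content (i, μ.rowLen i) : ZMod n), height (i, μ.rowLen i) - 1) (1 : ℤ)
        = Finsupp.single ((((μ.rowLen i : ℤ) - i : ℤ) : ZMod n), (i : ℤ) + μ.rowLen i) (1 : ℤ) := by
    intro i _
    simp only [content, height]
    congr 1
    ring
  have hR : ∀ i ∈ (Finset.range N).filter (fun i => μ.rowLen (i + 1) < μ.rowLen i),
      Finsupp.single ((content (i, μ.rowLen i - 1) : ZMod n), height (i, μ.rowLen i - 1) + 1) (1 : ℤ)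
        = Finsupp.single ((((μ.rowLen i : ℤ) - 1 - i : ℤ) : ZMod n), (i : ℤ) + μ.rowLen i + 1) (1 : ℤ) := by
    intro i hi
    simp only [Finset.mem_filter] at hi
    have h1 : 1 ≤ μ.rowLen i := by omega
    simp only [content, height]
    have : ((μ.rowLen i - 1 : ℕ) : ℤ) = (μ.rowLen i : ℤ) - 1 := by
      push_cast [h1]; ring
    rw [this]
    congr 1
    ring
  rw [Finset.sum_congr rfl hA, Finset.sum_congr rfl hR]
  -- now remove the filters
  rw [← Finset.sum_filter_add_sum_filter_not (Finset.range (N + 1))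
    (fun i => i = 0 ∨ μ.rowLen i < μ.rowLen (i - 1)),
    ← Finset.sum_filter_add_sum_filter_not (Finset.range N)
    (fun i => μ.rowLen (i + 1) < μ.rowLen i)]
  have key : ∑ i ∈ (Finset.range (N + 1)).filter
        (fun i => ¬(i = 0 ∨ μ.rowLen i < μ.rowLen (i - 1))),
        Finsupp.single ((((μ.rowLen i : ℤ) - i : ℤ) : ZMod n), (i : ℤ) + μ.rowLen i) (1 : ℤ)
      = ∑ i ∈ (Finset.range N).filter (fun i => ¬ μ.rowLen (i + 1) < μ.rowLen i),
        Finsupp.single ((((μ.rowLen i : ℤ) - 1 - i : ℤ) : ZMod n), (i : ℤ) + μ.rowLen i + 1) (1 : ℤ) := by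
    have hset : (Finset.range (N + 1)).filter
        (fun i => ¬(i = 0 ∨ μ.rowLen i < μ.rowLen (i - 1)))
        = ((Finset.range N).filter (fun i => ¬ μ.rowLen (i + 1) < μ.rowLen i)).image (· + 1) := by
      ext i
      simp only [Finset.mem_filter, Finset.mem_range, Finset.mem_image]
      constructor
      · rintro ⟨hi, hc⟩
        push_neg at hc
        exact ⟨i - 1, ⟨by omega, by
          have h2 : i - 1 + 1 = i := by omega
          rw [h2]; omega⟩, by omega⟩
      · rintro ⟨a, ⟨ha, hc⟩, rfl⟩
        refine ⟨by omega, by push_neg; exact ⟨by omega, by simpa using hc⟩⟩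
    rw [hset, Finset.sum_image (fun a _ b _ h => by omega)]
    apply Finset.sum_congr rfl
    intro a ha
    simp only [Finset.mem_filter, Finset.mem_range, not_lt] at ha
    have heq : μ.rowLen (a + 1) = μ.rowLen a :=
      le_antisymm (μ.rowLen_anti a (a + 1) (by omega)) ha.2
    rw [heq]
    have hc : ((a + 1 : ℕ) : ℤ) = (a : ℤ) + 1 := by push_cast; ring
    rw [hc]
    congr 1
    refine Prod.ext ?_ ?_
    · show (((μ.rowLen a : ℤ) - ((a : ℤ) + 1) : ℤ) : ZMod n) = _
      congr 1
      ring
    · show (a : ℤ) + 1 + (μ.rowLen a : ℤ) = _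
      ring
  rw [key]
  abel

lemma sum_sub_single {M : Type*} [AddCommGroup M] {N i0 : ℕ} (hi : i0 < N)
    (f g : ℕ → M) (h : ∀ i, i ≠ i0 → f i = g i) :
    (∑ i ∈ Finset.range N, f i) = (∑ i ∈ Finset.range N, g i) + (f i0 - g i0) := by
  have : (∑ i ∈ Finset.range N, f i) - (∑ i ∈ Finset.range N, g i) = f i0 - g i0 := by
    rw [← Finset.sum_sub_distrib]
    apply Finset.sum_eq_single_of_mem i0 (Finset.mem_range.mpr hi)
    intro i _ hi'
    rw [h i hi', sub_self]
  rw [← this]; abel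

/-- Lemma 5.1: if `μ = λ ⊔ b` is obtained from `λ` by adding a single box `b`, then
`Ψ(μ) = A_{c̄(b), h(b)}^{-1} Ψ(λ)` (written additively: `Ψ(μ) = Ψ(λ) - A_{c̄(b), h(b)}`). -/
theorem Psi_add_box (n : ℕ) (hn : 3 ≤ n) (lam mu : YoungDiagram) (b : ℕ × ℕ)
    (hb : IsAddable lam b) (hmu : mu.cells = insert b lam.cells) :
    Psi n mu = Psi n lam - Avar n (content b : ZMod n) (height b) := by
  obtain ⟨i0, j0⟩ := b
  have hj0 : lam.rowLen i0 = j0 := (isAddable_iff.mp hb).1.symm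
  have hmem_mu : ∀ q : ℕ × ℕ, q ∈ mu ↔ q = (i0, j0) ∨ q ∈ lam := by
    intro q; rw [← YoungDiagram.mem_cells, hmu, Finset.mem_insert, YoungDiagram.mem_cells]
  have hrow_ne : ∀ i, i ≠ i0 → mu.rowLen i = lam.rowLen i := by
    intro i hi
    have hm : ∀ j, (i, j) ∈ mu ↔ (i, j) ∈ lam := by
      intro j
      rw [hmem_mu]
      simp only [Prod.mk.injEq]
      constructor
      · rintro (⟨rfl, rfl⟩ | h)
        · exact absurd rfl hi
        · exact h
      · exact Or.inr
    apply le_antisymm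
    · by_contra h
      push_neg at h
      have : (i, lam.rowLen i) ∈ lam := (hm _).mp (YoungDiagram.mem_iff_lt_rowLen.mpr h)
      rw [YoungDiagram.mem_iff_lt_rowLen] at this; omega
    · by_contra h
      push_neg at h
      have : (i, mu.rowLen i) ∈ mu := (hm _).mpr (YoungDiagram.mem_iff_lt_rowLen.mpr h)
      rw [YoungDiagram.mem_iff_lt_rowLen] at this; omega
  have hrow_i0 : mu.rowLen i0 = j0 + 1 := by
    apply le_antisymm
    · by_contra h
      push_neg at h
      have h1 : (i0, j0 + 1) ∈ mu := YoungDiagram.mem_iff_lt_rowLen.mpr (by omega)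
      rcases (hmem_mu _).1 h1 with h' | h'
      · exact absurd (congrArg Prod.snd h') (by simp)
      · rw [YoungDiagram.mem_iff_lt_rowLen] at h'; omega
    · have h1 : (i0, j0) ∈ mu := (hmem_mu _).2 (Or.inl rfl)
      rw [YoungDiagram.mem_iff_lt_rowLen] at h1; omega
  set N := lam.colLen 0 + i0 + 1 with hNdef
  have hlamN : lam.rowLen N = 0 := by
    by_contra h
    have h1 : (N, 0) ∈ lam := YoungDiagram.mem_iff_lt_rowLen.mpr (by omega)
    rw [YoungDiagram.mem_iff_lt_colLen] at h1; omega
  have hmuN : mu.rowLen N = 0 := by rw [hrow_ne N (by omega)]; exact hlamN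
  rw [psi_eq n mu N hmuN, psi_eq n lam N hlamN]
  rw [sum_sub_single (by omega : i0 < N + 1)
      (fun i => Finsupp.single ((((mu.rowLen i : ℤ) - i : ℤ) : ZMod n), (i : ℤ) + mu.rowLen i) (1 : ℤ))
      (fun i => Finsupp.single ((((lam.rowLen i : ℤ) - i : ℤ) : ZMod n), (i : ℤ) + lam.rowLen i) (1 : ℤ))
      (fun i hi => by simp only [hrow_ne i hi]),
    sum_sub_single (by omega : i0 < N)
      (fun i => Finsupp.single ((((mu.rowLen i : ℤ) - 1 - i : ℤ) : ZMod n), (i : ℤ) + mu.rowLen i + 1) (1 : ℤ))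
      (fun i => Finsupp.single ((((lam.rowLen i : ℤ) - 1 - i : ℤ) : ZMod n), (i : ℤ) + lam.rowLen i + 1) (1 : ℤ))
      (fun i hi => by simp only [hrow_ne i hi])]
  simp only [hrow_i0, hj0]
  have hfin : Avar n (content (i0, j0) : ZMod n) (height (i0, j0))
      = (Finsupp.single (((((j0 + 1 : ℕ) : ℤ) - 1 - i0 : ℤ) : ZMod n), (i0 : ℤ) + ((j0 + 1 : ℕ) : ℤ) + 1) (1 : ℤ)
          - Finsupp.single ((((j0 : ℤ) - 1 - i0 : ℤ) : ZMod n), (i0 : ℤ) + (j0 : ℤ) + 1) (1 : ℤ))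
        - (Finsupp.single (((((j0 + 1 : ℕ) : ℤ) - i0 : ℤ) : ZMod n), (i0 : ℤ) + ((j0 + 1 : ℕ) : ℤ)) (1 : ℤ)
          - Finsupp.single ((((j0 : ℤ) - i0 : ℤ) : ZMod n), (i0 : ℤ) + (j0 : ℤ)) (1 : ℤ)) := by
    simp only [Avar, Yvar, content, height]
    push_cast
    ring_nf
    abel
  rw [hfin]
  abel
end

section
/- If b is an addable box and b' a removable box of a partition λ, with b and b' neither in the same row nor the same column, then there exists a unique box a in λ lying in the same row or column as b and also in the same row or column as b'. -/

lemma addable_rowLen_s18 (μ : YoungDiagram) (b : ℕ × ℕ)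
    (hb : b ∉ μ ∧ ∃ ν : YoungDiagram, ν.cells = insert b μ.cells) :
    μ.rowLen b.1 = b.2 := by
  obtain ⟨hbn, ν, hν⟩ := hb
  have h1 : μ.rowLen b.1 ≤ b.2 := by
    by_contra h
    push_neg at h
    exact hbn (YoungDiagram.mem_iff_lt_rowLen.mpr h)
  refine le_antisymm h1 ?_
  rcases Nat.eq_zero_or_pos b.2 with h0 | h0
  · omega
  have hbν : b ∈ ν := by
    rw [← YoungDiagram.mem_cells, hν]; exact Finset.mem_insert_self _ _
  have h2 : (b.1, b.2 - 1) ∈ ν := ν.up_left_mem le_rfl (Nat.sub_le _ _) hbν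
  have h3 : (b.1, b.2 - 1) ∈ μ := by
    rw [← YoungDiagram.mem_cells, hν] at h2
    rcases Finset.mem_insert.mp h2 with h | h
    · exfalso; apply hbn
      have : b.2 - 1 = b.2 := congrArg Prod.snd h
      omega
    · exact YoungDiagram.mem_cells _ |>.mp h
  have := YoungDiagram.mem_iff_lt_rowLen.mp h3
  omega

lemma removable_notmem (μ : YoungDiagram) (b' : ℕ × ℕ)
    (hb' : b' ∈ μ ∧ ∃ ν : YoungDiagram, ν.cells = μ.cells.erase b')
    (c : ℕ × ℕ) (hle1 : b'.1 ≤ c.1) (hle2 : b'.2 ≤ c.2) (hne : c ≠ b') : c ∉ μ := by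
  obtain ⟨hbm, ν, hν⟩ := hb'
  intro hc
  have hcν : c ∈ ν := by
    rw [← YoungDiagram.mem_cells, hν]
    exact Finset.mem_erase.mpr ⟨hne, (YoungDiagram.mem_cells _).mpr hc⟩
  have h2 : (b'.1, b'.2) ∈ ν := ν.up_left_mem hle1 hle2 (show (c.1, c.2) ∈ ν from hcν)
  have h3 : b' ∈ ν := by rwa [Prod.mk.eta] at h2
  rw [← YoungDiagram.mem_cells, hν] at h3
  exact (Finset.mem_erase.mp h3).1 rfl

/-- If `b` is an addable box and `b'` a removable box of a partition, lying neither in the same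
row nor the same column, then there is a unique box `a` of the partition in the same row or
column as `b` and also in the same row or column as `b'`. -/
theorem unique_hook_corner (mu : YoungDiagram) (b b' : ℕ × ℕ)
    (hb : IsAddable mu b) (hb' : IsRemovable mu b')
    (hrow : b.1 ≠ b'.1) (hcol : b.2 ≠ b'.2) :
    ∃! a : ℕ × ℕ, a ∈ mu ∧ (a.1 = b.1 ∨ a.2 = b.2) ∧ (a.1 = b'.1 ∨ a.2 = b'.2) := by
  have hrb : mu.rowLen b.1 = b.2 := addable_rowLen_s18 mu b hb
  have hrb' : mu.rowLen b'.1 = b'.2 + 1 := by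
    have h1 : b'.2 < mu.rowLen b'.1 := YoungDiagram.mem_iff_lt_rowLen.mp
      (by rw [Prod.mk.eta]; exact hb'.1)
    have h2 : (b'.1, b'.2 + 1) ∉ mu := removable_notmem mu b' hb' (b'.1, b'.2 + 1)
      le_rfl (by omega) (by intro h; have := congrArg Prod.snd h; simp at this)
    rw [YoungDiagram.mem_iff_lt_rowLen] at h2
    omega
  rcases lt_or_gt_of_ne hrow with h | h
  · -- b.1 < b'.1
    have hlt : b'.2 < b.2 := by
      have := mu.rowLen_anti b.1 b'.1 h.le
      omega
    refine ⟨(b.1, b'.2), ⟨?_, Or.inl rfl, Or.inr rfl⟩, ?_⟩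
    · exact YoungDiagram.mem_iff_lt_rowLen.mpr (by omega)
    · rintro a ⟨ham, h1 | h1, h2 | h2⟩
      · exact absurd (h1.symm.trans h2) hrow
      · exact Prod.ext h1 h2
      · exfalso
        have : a.2 < mu.rowLen a.1 := YoungDiagram.mem_iff_lt_rowLen.mp
          (by rw [Prod.mk.eta]; exact ham)
        rw [h2, h1] at this
        omega
      · exact absurd (h1.symm.trans h2) hcol
  · -- b'.1 < b.1
    have hlt : b.2 < b'.2 := by
      rcases Nat.lt_or_ge b.2 b'.2 with h' | h'
      · exact h'
      exfalso
      have hne : b'.2 < b.2 := by omega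
      have hmem : (b'.1 + 1, b'.2) ∈ mu := by
        apply YoungDiagram.mem_iff_lt_rowLen.mpr
        have := mu.rowLen_anti (b'.1 + 1) b.1 (by omega)
        omega
      exact removable_notmem mu b' hb' (b'.1 + 1, b'.2) (by omega) le_rfl
        (by intro hh; have := congrArg Prod.fst hh; simp at this) hmem
    refine ⟨(b'.1, b.2), ⟨?_, Or.inr rfl, Or.inl rfl⟩, ?_⟩
    · exact YoungDiagram.mem_iff_lt_rowLen.mpr (by omega)
    · rintro a ⟨ham, h1 | h1, h2 | h2⟩
      · exact absurd (h1.symm.trans (h2.trans rfl)) (by omega)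
      · exfalso
        have : a.2 < mu.rowLen a.1 := YoungDiagram.mem_iff_lt_rowLen.mp
          (by rw [Prod.mk.eta]; exact ham)
        rw [h1, h2] at this
        omega
      · exact Prod.ext h2 h1
      · exact absurd (h1.symm.trans h2) hcol
end
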